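/- Let d and k be positive integers and let α ≥ 0 be a real number. Let G be a finite simple graph with Δ(G) ≤ d, and let u be a vertex of G of degree p with 1 ≤ p ≤ k−1 such that at most (1+α)k − p neighbors of u have degree at least d−k+2 in G. If G − u admits an incidence (d + ⌊(1+α)k⌋ − 1, ⌊(1+α)k⌋ − 1)-coloring, then G admits an incidence (d + ⌊(1+α)k⌋ − 1, ⌊(1+α)k⌋ − 1)-coloring. -/

import Mathlib

open SimpleGraph

/-- An incidence coloring of `G` with `n` colors, where `φ v u` is the color of the
incidence `(v, vu)` (meaningful when `G.Adj v u`): two distinct adjacent incidences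
`(v, vu)` and `(w, wx)` receive distinct colors. Incidences `(v, e)` and `(w, f)` are
adjacent if `v = w`, or `e = f`, or the edge `vw` equals `e` or `f`. -/
def IsIncidenceColoring {V : Type*} (G : SimpleGraph V) {n : ℕ} (φ : V → V → Fin n) : Prop :=
  ∀ ⦃v u w x : V⦄, G.Adj v u → G.Adj w x → (v, u) ≠ (w, x) →
    (v = w ∨ s(v, u) = s(w, x) ∨ s(v, w) = s(v, u) ∨ s(v, w) = s(w, x)) →
    φ v u ≠ φ w x

/-- `G` admits an incidence `(n, ℓ)`-coloring: an incidence coloring with `n` colors such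
that for every vertex `v`, at most `ℓ` distinct colors appear on the incidences of the
form `(u, uv)` where `u` ranges over the neighbors of `v`. -/
def HasIncidenceColoring {V : Type*} (G : SimpleGraph V) (n ℓ : ℕ) : Prop :=
  ∃ φ : V → V → Fin n, IsIncidenceColoring G φ ∧
    ∀ v : V, ({c : Fin n | ∃ u : V, G.Adj u v ∧ φ u v = c}).ncard ≤ ℓ

/-- The incidence chromatic number: the least `n` such that `G` admits an incidence
`n`-coloring. -/
noncomputable def incChromaticNumber {V : Type*} (G : SimpleGraph V) : ℕ :=
  sInf {n : ℕ | ∃ φ : V → V → Fin n, IsIncidenceColoring G φ}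

/-- `mad(G) < q`: every nonempty subgraph `H` of `G` satisfies `2|E(H)| < q·|V(H)|`. -/
def MadLT {V : Type*} (G : SimpleGraph V) (q : ℝ) : Prop :=
  ∀ H : G.Subgraph, H.verts.Nonempty →
    (2 * H.edgeSet.ncard : ℝ) < q * H.verts.ncard

lemma selection_aux (N d K p : ℕ) {ι : Type*} [Fintype ι] [DecidableEq ι]
    (hN : N = d + K - 1) (hd : 1 ≤ d) (hpK : p + 1 ≤ K) (hcard : Fintype.card ι = p)
    (A B : ι → Finset (Fin N)) (High : Finset ι)
    (hA : ∀ j, (A j).card + 1 ≤ K) (hB : ∀ j, (B j).card + 1 ≤ d)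
    (hdisj : ∀ j, ∀ c ∈ A j, c ∉ B j)
    (hHigh : High.card + p ≤ K)
    (hlow : ∀ j ∉ High, (B j).card + p ≤ d) :
    ∃ (dd cc : ι → Fin N), Function.Injective dd ∧
      (∀ i j, cc i ≠ dd j) ∧ (∀ j, dd j ∉ B j) ∧
      (∀ j, cc j ∉ A j) ∧ (∀ j, cc j ∉ B j) ∧
      (∀ j, (insert (dd j) (A j)).card + 1 ≤ K) := by
  classical
  have hN1 : 1 ≤ N := by omega
  have hABlt : ∀ j, ((A j ∪ B j)).card < N := by
    intro j
    have h1 := hA j; have h2 := hB j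
    have := Finset.card_union_le (A j) (B j)
    omega
  have hchne : ∀ j : ι, (Finset.univ \ (A j ∪ B j)).Nonempty := by
    intro j
    rw [← Finset.card_pos, Finset.card_sdiff_of_subset (Finset.subset_univ _), Finset.card_univ,
      Fintype.card_fin]
    have := hABlt j; omega
  set ch : ι → Fin N := fun j => (Finset.univ \ (A j ∪ B j)).min' (hchne j) with hch_def
  have hch : ∀ j, ch j ∉ A j ∪ B j := by
    intro j
    have := Finset.min'_mem _ (hchne j)
    simp only [Finset.mem_sdiff] at this
    exact this.2
  set CH : Finset (Fin N) := High.image ch with hCH_def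
  have hCHcard : CH.card ≤ High.card := Finset.card_image_le
  -- tightness
  set T : ι → Finset (Fin N) :=
    fun j => (if K ≤ (A j).card + 1 then A j else Finset.univ) \ (B j ∪ CH) with hT_def
  -- size bounds
  have hAdiff : ∀ j (X : Finset (Fin N)), A j \ (B j ∪ X) = A j \ X := by
    intro j X
    ext c
    simp only [Finset.mem_sdiff, Finset.mem_union]
    constructor
    · rintro ⟨h1, h2⟩; exact ⟨h1, fun h => h2 (Or.inr h)⟩
    · rintro ⟨h1, h2⟩; exact ⟨h1, fun h => h.elim (fun hb => hdisj j c h1 hb) h2⟩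
  have hT1 : ∀ j, p ≤ (T j).card + 1 := by
    intro j
    rw [hT_def]
    by_cases ht : K ≤ (A j).card + 1
    · simp only [if_pos ht]
      rw [hAdiff]
      have := Finset.le_card_sdiff CH (A j)
      have h1 := hA j
      omega
    · simp only [if_neg ht]
      have := Finset.le_card_sdiff (B j ∪ CH) Finset.univ
      have h2 := Finset.card_union_le (B j) CH
      have h3 := hB j
      rw [Finset.card_univ, Fintype.card_fin] at this
      omega
  have hT2 : ∀ j ∈ High, p ≤ (T j).card := by
    intro j hj
    rw [hT_def]
    by_cases ht : K ≤ (A j).card + 1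
    · simp only [if_pos ht]
      rw [hAdiff]
      have hchA : ch j ∉ A j := fun h => hch j (Finset.mem_union_left _ h)
      have heq : A j \ CH = A j \ CH.erase (ch j) := by
        ext c
        simp only [Finset.mem_sdiff, Finset.mem_erase]
        constructor
        · rintro ⟨h1, h2⟩; exact ⟨h1, fun h => h2 h.2⟩
        · rintro ⟨h1, h2⟩
          refine ⟨h1, fun h => ?_⟩
          by_cases hcc : c = ch j
          · exact hchA (hcc ▸ h1)
          · exact h2 ⟨hcc, h⟩
      rw [heq]
      have h2 := Finset.le_card_sdiff (CH.erase (ch j)) (A j)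
      have h3 : (CH.erase (ch j)).card + 1 ≤ CH.card := by
        have : ch j ∈ CH := Finset.mem_image_of_mem ch hj
        rw [Finset.card_erase_of_mem this]
        have : 0 < CH.card := Finset.card_pos.mpr ⟨ch j, this⟩
        omega
      have h4 := hA j
      omega
    · simp only [if_neg ht]
      have := Finset.le_card_sdiff (B j ∪ CH) Finset.univ
      have h2 := Finset.card_union_le (B j) CH
      have h3 := hB j
      rw [Finset.card_univ, Fintype.card_fin] at this
      omega
  have hT3 : High = ∅ → ∀ j, p ≤ (T j).card := by
    intro hHe j
    have hCHe : CH = ∅ := by rw [hCH_def, hHe, Finset.image_empty]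
    rw [hT_def]
    by_cases ht : K ≤ (A j).card + 1
    · simp only [if_pos ht]
      rw [hAdiff, hCHe, Finset.sdiff_empty]
      have := hA j; omega
    · simp only [if_neg ht]
      have := Finset.le_card_sdiff (B j ∪ CH) Finset.univ
      have h2 := Finset.card_union_le (B j) CH
      have h3 := hB j
      have h4 : CH.card = 0 := by rw [hCHe]; rfl
      rw [Finset.card_univ, Fintype.card_fin] at this
      omega
  have hall : ∀ s : Finset ι, s.card ≤ (s.biUnion T).card := by
    intro s
    rcases s.eq_empty_or_nonempty with rfl | ⟨j0, hj0⟩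
    · simp
    have hsp : s.card ≤ p := by
      rw [← hcard, ← Finset.card_univ]; exact Finset.card_le_univ s
    have key : ∀ j ∈ s, (T j).card ≤ (s.biUnion T).card := by
      intro j hj
      exact Finset.card_le_card (Finset.subset_biUnion_of_mem T hj)
    by_cases hfull : s = Finset.univ
    · subst hfull
      rcases High.eq_empty_or_nonempty with hHe | ⟨j1, hj1⟩
      · exact le_trans hsp (le_trans (hT3 hHe j0) (key j0 hj0))
      · exact le_trans hsp (le_trans (hT2 j1 hj1) (key j1 (Finset.mem_univ j1)))
    · have : s.card < p := by
        rw [← hcard, ← Finset.card_univ]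
        exact Finset.card_lt_card (Finset.ssubset_univ_iff.mpr hfull)
      have := hT1 j0
      have := key j0 hj0
      omega
  obtain ⟨dd, hddinj, hddT⟩ := (Finset.all_card_le_biUnion_card_iff_exists_injective T).mp hall
  set D : Finset (Fin N) := Finset.univ.image dd with hD_def
  have hDcard : D.card ≤ p := by
    rw [hD_def, ← hcard, ← Finset.card_univ]
    exact Finset.card_image_le
  have hddB : ∀ j, dd j ∉ B j := by
    intro j
    have := hddT j
    rw [hT_def] at this
    simp only [Finset.mem_sdiff, Finset.mem_union] at this
    exact fun h => this.2 (Or.inl h)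
  have hddCH : ∀ j, dd j ∉ CH := by
    intro j
    have := hddT j
    rw [hT_def] at this
    simp only [Finset.mem_sdiff, Finset.mem_union] at this
    exact fun h => this.2 (Or.inr h)
  have hddA : ∀ j, K ≤ (A j).card + 1 → dd j ∈ A j := by
    intro j ht
    have := hddT j
    rw [hT_def] at this
    simp only [if_pos ht, Finset.mem_sdiff] at this
    exact this.1
  have hins : ∀ j, (insert (dd j) (A j)).card + 1 ≤ K := by
    intro j
    by_cases ht : K ≤ (A j).card + 1
    · rw [Finset.insert_eq_self.mpr (hddA j ht)]
      exact hA j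
    · have := Finset.card_insert_le (dd j) (A j)
      omega
  -- low color choice
  have hclne : ∀ j ∉ High, (Finset.univ \ (A j ∪ B j ∪ D)).Nonempty := by
    intro j hj
    rw [← Finset.card_pos, Finset.card_sdiff_of_subset (Finset.subset_univ _), Finset.card_univ,
      Fintype.card_fin]
    have hsub : A j ∪ B j ∪ D ⊆ insert (dd j) (A j) ∪ B j ∪ D.erase (dd j) := by
      intro c hc
      simp only [Finset.mem_union, Finset.mem_insert, Finset.mem_erase] at hc ⊢
      rcases hc with (h | h) | h
      · exact Or.inl (Or.inl (Or.inr h))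
      · exact Or.inl (Or.inr h)
      · by_cases hcc : c = dd j
        · exact Or.inl (Or.inl (Or.inl hcc))
        · exact Or.inr ⟨hcc, h⟩
    have h1 : (A j ∪ B j ∪ D).card ≤ (insert (dd j) (A j)).card + (B j).card
        + (D.erase (dd j)).card := by
      calc (A j ∪ B j ∪ D).card
          ≤ (insert (dd j) (A j) ∪ B j ∪ D.erase (dd j)).card := Finset.card_le_card hsub
        _ ≤ (insert (dd j) (A j)).card + (B j).card + (D.erase (dd j)).card := by
            have h2 := Finset.card_union_le (insert (dd j) (A j) ∪ B j) (D.erase (dd j))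
            have h3 := Finset.card_union_le (insert (dd j) (A j)) (B j)
            omega
    have h4 : (D.erase (dd j)).card + 1 ≤ D.card := by
      have hm : dd j ∈ D := Finset.mem_image_of_mem dd (Finset.mem_univ j)
      rw [Finset.card_erase_of_mem hm]
      have : 0 < D.card := Finset.card_pos.mpr ⟨dd j, hm⟩
      omega
    have h5 := hins j
    have h6 := hlow j hj
    omega
  set cc : ι → Fin N := fun j =>
    if hj : j ∈ High then ch j else (Finset.univ \ (A j ∪ B j ∪ D)).min' (hclne j hj)
    with hcc_def
  have hccnotAB : ∀ j, cc j ∉ A j ∪ B j := by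
    intro j
    rw [hcc_def]
    by_cases hj : j ∈ High
    · simp only [dif_pos hj]; exact hch j
    · simp only [dif_neg hj]
      have := Finset.min'_mem _ (hclne j hj)
      simp only [Finset.mem_sdiff, Finset.mem_union] at this
      intro h
      rcases Finset.mem_union.mp h with h | h
      · exact this.2 (Or.inl (Or.inl h))
      · exact this.2 (Or.inl (Or.inr h))
  have hccD : ∀ i j, cc i ≠ dd j := by
    intro i j
    rw [hcc_def]
    by_cases hi : i ∈ High
    · simp only [dif_pos hi]
      intro h
      exact hddCH j (h ▸ Finset.mem_image_of_mem ch hi)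
    · simp only [dif_neg hi]
      have := Finset.min'_mem _ (hclne i hi)
      simp only [Finset.mem_sdiff, Finset.mem_union] at this
      intro h
      exact this.2 (Or.inr (h ▸ Finset.mem_image_of_mem dd (Finset.mem_univ j)))
  exact ⟨dd, cc, hddinj, hccD, hddB,
    fun j h => hccnotAB j (Finset.mem_union_left _ h),
    fun j h => hccnotAB j (Finset.mem_union_right _ h), hins⟩

theorem incidence_coloring_extend_low_degree_vertex {V : Type*} [Fintype V] [DecidableEq V]
    (G : SimpleGraph V) [DecidableRel G.Adj]
    (d k : ℕ) (hd : 0 < d) (hk : 0 < k) (α : ℝ) (hα : 0 ≤ α)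
    (hΔ : G.maxDegree ≤ d) (u : V) (p : ℕ) (hpu : G.degree u = p)
    (hp1 : 1 ≤ p) (hpk : p ≤ k - 1)
    (hnb : ((((G.neighborFinset u).filter (fun w => d - k + 2 ≤ G.degree w)).card : ℝ))
        ≤ (1 + α) * (k : ℝ) - (p : ℝ))
    (hcol : HasIncidenceColoring (G.induce ({u}ᶜ : Set V))
        (d + ⌊(1 + α) * (k : ℝ)⌋₊ - 1) (⌊(1 + α) * (k : ℝ)⌋₊ - 1)) :
    HasIncidenceColoring G (d + ⌊(1 + α) * (k : ℝ)⌋₊ - 1) (⌊(1 + α) * (k : ℝ)⌋₊ - 1) := by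
  classical
  set K := ⌊(1 + α) * (k : ℝ)⌋₊ with hK_def
  set N := d + K - 1 with hN_def
  set Gind := G.induce ({u}ᶜ : Set V) with hGind_def
  obtain ⟨φ₀, hφ₀, hℓ₀⟩ := hcol
  have hkK : k ≤ K := Nat.le_floor (by push_cast; nlinarith)
  have hpk' : p + 1 ≤ k := by omega
  have hpK : p + 1 ≤ K := by omega
  have hpd : p ≤ d := hpu ▸ le_trans (G.degree_le_maxDegree u) hΔ
  have hmemW : ∀ {x : V}, x ≠ u → x ∈ ({u}ᶜ : Set V) := fun h =>
    Set.mem_compl_singleton_iff.mpr h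
  -- the neighbor index type
  set nbr := G.neighborFinset u with hnbr_def
  have hadj_of_mem : ∀ {x : V}, x ∈ nbr → G.Adj u x := fun h =>
    (SimpleGraph.mem_neighborFinset G u _).mp h
  have hmem_of_adj : ∀ {x : V}, G.Adj u x → x ∈ nbr := fun h =>
    (SimpleGraph.mem_neighborFinset G u _).mpr h
  have hne_of_mem : ∀ {x : V}, x ∈ nbr → x ≠ u := fun h => ((hadj_of_mem h).ne).symm
  set jW : {x // x ∈ nbr} → ↥({u}ᶜ : Set V) :=
    fun j => ⟨(j : V), hmemW (hne_of_mem j.2)⟩ with hjW_def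
  have hindAdj : ∀ (a b : ↥({u}ᶜ : Set V)), Gind.Adj a b ↔ G.Adj (a : V) (b : V) := by
    intro a b; rw [hGind_def]; exact Iff.rfl
  set A : {x // x ∈ nbr} → Finset (Fin N) :=
    fun j => Finset.image (fun y => φ₀ y (jW j))
      (Finset.univ.filter fun y => Gind.Adj y (jW j)) with hA_def
  set B : {x // x ∈ nbr} → Finset (Fin N) :=
    fun j => Finset.image (fun y => φ₀ (jW j) y)
      (Finset.univ.filter fun y => Gind.Adj (jW j) y) with hB_def
  have hAmem : ∀ (j) (y : ↥({u}ᶜ : Set V)), Gind.Adj y (jW j) → φ₀ y (jW j) ∈ A j := by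
    intro j y hy
    rw [hA_def]
    exact Finset.mem_image_of_mem _ (Finset.mem_filter.mpr ⟨Finset.mem_univ _, hy⟩)
  have hBmem : ∀ (j) (y : ↥({u}ᶜ : Set V)), Gind.Adj (jW j) y → φ₀ (jW j) y ∈ B j := by
    intro j y hy
    rw [hB_def]
    exact Finset.mem_image_of_mem _ (Finset.mem_filter.mpr ⟨Finset.mem_univ _, hy⟩)
  have hAset : ∀ j, (↑(A j) : Set (Fin N))
      = {c : Fin N | ∃ y, Gind.Adj y (jW j) ∧ φ₀ y (jW j) = c} := by
    intro j
    rw [hA_def]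
    ext c
    constructor
    · intro hc
      simp only [Finset.mem_coe, Finset.mem_image, Finset.mem_filter, Finset.mem_univ,
        true_and] at hc
      obtain ⟨y, hy, rfl⟩ := hc
      exact ⟨y, hy, rfl⟩
    · rintro ⟨y, hy, rfl⟩
      simp only [Finset.mem_coe, Finset.mem_image, Finset.mem_filter, Finset.mem_univ,
        true_and]
      exact ⟨y, hy, rfl⟩
  have hA : ∀ j, (A j).card + 1 ≤ K := by
    intro j
    have h1 := hℓ₀ (jW j)
    rw [← hAset j] at h1
    rw [Set.ncard_coe_finset] at h1
    omega
  have hdegpos : ∀ j : {x // x ∈ nbr}, 1 ≤ G.degree (j : V) := by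
    intro j
    rw [← SimpleGraph.card_neighborFinset_eq_degree]
    exact Finset.card_pos.mpr ⟨u, (SimpleGraph.mem_neighborFinset G _ _).mpr
      (hadj_of_mem j.2).symm⟩
  have hBle : ∀ j : {x // x ∈ nbr}, (B j).card + 1 ≤ G.degree (j : V) := by
    intro j
    have h1 : (B j).card ≤
        (Finset.univ.filter fun y => Gind.Adj (jW j) y).card := by
      rw [hB_def]; exact Finset.card_image_le
    have h2 : (Finset.univ.filter fun y => Gind.Adj (jW j) y).card
        ≤ ((G.neighborFinset (j : V)).erase u).card := by
      refine Finset.card_le_card_of_injOn (fun y => (y : V)) ?_ ?_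
      · intro y hy
        rw [Finset.mem_coe, Finset.mem_filter] at hy
        rw [Finset.mem_coe, Finset.mem_erase]
        refine ⟨?_, (SimpleGraph.mem_neighborFinset G _ _).mpr ((hindAdj _ _).mp hy.2)⟩
        exact Set.mem_compl_singleton_iff.mp y.2
      · exact fun a _ b _ h => Subtype.ext h
    have h3 : ((G.neighborFinset (j : V)).erase u).card = G.degree (j : V) - 1 := by
      rw [Finset.card_erase_of_mem ((SimpleGraph.mem_neighborFinset G _ _).mpr
        (hadj_of_mem j.2).symm), SimpleGraph.card_neighborFinset_eq_degree]
    have h4 := hdegpos j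
    omega
  have hdegle : ∀ j : {x // x ∈ nbr}, G.degree (j : V) ≤ d :=
    fun j => le_trans (G.degree_le_maxDegree _) hΔ
  have hB : ∀ j, (B j).card + 1 ≤ d := fun j => le_trans (hBle j) (hdegle j)
  have hdisj : ∀ j, ∀ c ∈ A j, c ∉ B j := by
    intro j c hcA hcB
    rw [hA_def] at hcA
    rw [hB_def] at hcB
    simp only [Finset.mem_image, Finset.mem_filter, Finset.mem_univ, true_and] at hcA hcB
    obtain ⟨y, hy, hyc⟩ := hcA
    obtain ⟨z, hz, hzc⟩ := hcB
    refine hφ₀ hy hz ?_ ?_ (hyc.trans hzc.symm)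
    · intro h
      rw [Prod.mk.injEq] at h
      exact (Gind.ne_of_adj hy) h.1
    · exact Or.inr (Or.inr (Or.inl rfl))
  set High : Finset {x // x ∈ nbr} :=
    Finset.univ.filter (fun j => d - k + 2 ≤ G.degree (j : V)) with hHigh_def
  have hHighcard : High.card
      = (nbr.filter (fun w => d - k + 2 ≤ G.degree w)).card := by
    rw [hHigh_def]
    refine Finset.card_bij (fun j _ => (j : V)) ?_ ?_ ?_
    · intro a ha
      rw [Finset.mem_filter] at ha ⊢
      exact ⟨a.2, ha.2⟩
    · intro a _ b _ h
      exact Subtype.ext h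
    · intro b hb
      rw [Finset.mem_filter] at hb
      exact ⟨⟨b, hb.1⟩, Finset.mem_filter.mpr ⟨Finset.mem_univ _, hb.2⟩, rfl⟩
  have hHigh : High.card + p ≤ K := by
    apply Nat.le_floor
    push_cast
    rw [hHighcard]
    rw [hnbr_def]
    linarith [hnb]
  have hlow : ∀ j ∉ High, (B j).card + p ≤ d := by
    intro j hj
    rw [hHigh_def, Finset.mem_filter] at hj
    push_neg at hj
    have hdj : G.degree (j : V) ≤ d - k + 1 := by
      have := hj (Finset.mem_univ j)
      omega
    have := hBle j
    omega
  have hcard : Fintype.card {x // x ∈ nbr} = p := by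
    rw [Fintype.card_coe, hnbr_def, SimpleGraph.card_neighborFinset_eq_degree, hpu]
  obtain ⟨dd, cc, hddinj, hccdd, hddB, hccA, hccB, hins⟩ :=
    selection_aux N d K p hN_def hd hpK hcard A B High hA hB hdisj hHigh hlow
  have hN1 : 1 ≤ N := by omega
  set z : Fin N := ⟨0, hN1⟩ with hz_def
  set φ : V → V → Fin N := fun a b =>
    if ha : a = u then (if hb : b ∈ nbr then dd ⟨b, hb⟩ else z)
    else if hb : b = u then (if ha2 : a ∈ nbr then cc ⟨a, ha2⟩ else z)
    else φ₀ ⟨a, hmemW ha⟩ ⟨b, hmemW hb⟩ with hφ_def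
  have φdd : ∀ {b : V} (hb : G.Adj u b), φ u b = dd ⟨b, hmem_of_adj hb⟩ := by
    intro b hb
    rw [hφ_def]
    simp only [dif_pos rfl, dif_pos (hmem_of_adj hb), dite_true]
  have φcc : ∀ {a : V} (ha : G.Adj a u), φ a u = cc ⟨a, hmem_of_adj ha.symm⟩ := by
    intro a ha
    rw [hφ_def]
    simp only [dif_neg ha.ne, dif_pos rfl, dif_pos (hmem_of_adj ha.symm), dite_true]
  have φold : ∀ {a b : V} (ha : a ≠ u) (hb : b ≠ u),
      φ a b = φ₀ ⟨a, hmemW ha⟩ ⟨b, hmemW hb⟩ := by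
    intro a b ha hb
    rw [hφ_def]
    simp only [dif_neg ha, dif_neg hb]
  have hlift : ∀ (x y zz w : ↥({u}ᶜ : Set V)),
      s((x : V), (y : V)) = s((zz : V), (w : V)) → s(x, y) = s(zz, w) := by
    intro x y zz w h
    rw [Sym2.eq_iff] at h ⊢
    rcases h with ⟨h1, h2⟩ | ⟨h1, h2⟩
    · exact Or.inl ⟨Subtype.ext h1, Subtype.ext h2⟩
    · exact Or.inr ⟨Subtype.ext h1, Subtype.ext h2⟩
  refine ⟨φ, ?_, ?_⟩
  · -- incidence coloring property
    intro v a w b h1 h2 hne hdis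
    by_cases hv : v = u
    · obtain rfl := hv.symm
      have ha : a ≠ u := h1.ne'
      by_cases hw : w = u
      · obtain rfl := hw.symm
        have hb : b ≠ u := h2.ne'
        rw [φdd h1, φdd h2]
        intro h
        have : a = b := congrArg Subtype.val (hddinj h)
        exact hne (by rw [this])
      · by_cases hb : b = u
        · obtain rfl := hb.symm
          rw [φdd h1, φcc h2]
          exact (hccdd _ _).symm
        · rw [φdd h1, φold hw hb]
          rcases hdis with h | h | h | h
          · exact absurd h.symm hw
          · rw [Sym2.eq_iff] at h
            rcases h with ⟨h', -⟩ | ⟨h', -⟩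
            · exact absurd h'.symm hw
            · exact absurd h'.symm hb
          · rw [Sym2.eq_iff] at h
            rcases h with ⟨-, h'⟩ | ⟨h', -⟩
            · -- w = a
              subst h'
              intro heq
              refine hddB ⟨w, hmem_of_adj h1⟩ ?_
              rw [heq]
              exact hBmem _ ⟨b, hmemW hb⟩ ((hindAdj _ _).mpr h2)
            · exact absurd h'.symm ha
          · rw [Sym2.eq_iff] at h
            rcases h with ⟨h', -⟩ | ⟨h', -⟩
            · exact absurd h'.symm hw
            · exact absurd h'.symm hb
    · by_cases ha : a = u
      · obtain rfl := ha.symm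
        by_cases hw : w = u
        · obtain rfl := hw.symm
          rw [φcc h1, φdd h2]
          exact hccdd _ _
        · by_cases hb : b = u
          · obtain rfl := hb.symm
            rcases hdis with h | h | h | h
            · exact absurd (by rw [h]) hne
            · rw [Sym2.eq_iff] at h
              rcases h with ⟨h', -⟩ | ⟨h', -⟩
              · exact absurd (by rw [h']) hne
              · exact absurd h' hv
            · rw [Sym2.eq_iff] at h
              rcases h with ⟨-, h'⟩ | ⟨h', -⟩
              · exact absurd h' hw
              · exact absurd h' hv
            · rw [Sym2.eq_iff] at h
              rcases h with ⟨-, h'⟩ | ⟨h', -⟩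
              · exact absurd h' hw
              · exact absurd h' hv
          · rw [φcc h1, φold hw hb]
            rcases hdis with h | h | h | h
            · -- v = w
              subst h
              intro heq
              refine hccB ⟨v, hmem_of_adj h1.symm⟩ ?_
              rw [heq]
              exact hBmem _ ⟨b, hmemW hb⟩ ((hindAdj _ _).mpr h2)
            · rw [Sym2.eq_iff] at h
              rcases h with ⟨-, h'⟩ | ⟨-, h'⟩
              · exact absurd h'.symm hb
              · exact absurd h'.symm hw
            · rw [Sym2.eq_iff] at h
              rcases h with ⟨-, h'⟩ | ⟨h', -⟩
              · exact absurd h' hw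
              · exact absurd h' hv
            · rw [Sym2.eq_iff] at h
              rcases h with ⟨h', h''⟩ | ⟨h', -⟩
              · exact absurd h'' h2.ne
              · -- v = b
                subst h'
                intro heq
                refine hccA ⟨v, hmem_of_adj h1.symm⟩ ?_
                rw [heq]
                exact hAmem _ ⟨w, hmemW hw⟩ ((hindAdj _ _).mpr h2)
      · by_cases hw : w = u
        · obtain rfl := hw.symm
          have hb : b ≠ u := h2.ne'
          rw [φold hv ha, φdd h2]
          rcases hdis with h | h | h | h
          · exact absurd h hv
          · rw [Sym2.eq_iff] at h
            rcases h with ⟨h', -⟩ | ⟨-, h'⟩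
            · exact absurd h' hv
            · exact absurd h' ha
          · rw [Sym2.eq_iff] at h
            rcases h with ⟨-, h'⟩ | ⟨-, h'⟩
            · exact absurd h'.symm ha
            · exact absurd h'.symm hv
          · rw [Sym2.eq_iff] at h
            rcases h with ⟨h', -⟩ | ⟨h', -⟩
            · exact absurd h' hv
            · -- v = b
              subst h'
              intro heq
              refine hddB ⟨v, hmem_of_adj h2⟩ ?_
              rw [← heq]
              exact hBmem _ ⟨a, hmemW ha⟩ ((hindAdj _ _).mpr h1)
        · by_cases hb : b = u
          · obtain rfl := hb.symm
            rw [φold hv ha, φcc h2]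
            rcases hdis with h | h | h | h
            · -- v = w
              subst h
              intro heq
              refine hccB ⟨v, hmem_of_adj h2.symm⟩ ?_
              rw [← heq]
              exact hBmem _ ⟨a, hmemW ha⟩ ((hindAdj _ _).mpr h1)
            · rw [Sym2.eq_iff] at h
              rcases h with ⟨-, h'⟩ | ⟨h', -⟩
              · exact absurd h' ha
              · exact absurd h' hv
            · rw [Sym2.eq_iff] at h
              rcases h with ⟨-, h'⟩ | ⟨h', h''⟩
              · -- w = a
                subst h'
                intro heq
                refine hccA ⟨w, hmem_of_adj h2.symm⟩ ?_
                rw [← heq]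
                exact hAmem _ ⟨v, hmemW hv⟩ ((hindAdj _ _).mpr h1)
              · exact absurd h' h1.ne
            · rw [Sym2.eq_iff] at h
              rcases h with ⟨-, h'⟩ | ⟨h', -⟩
              · exact absurd h' hw
              · exact absurd h' hv
          · rw [φold hv ha, φold hw hb]
            refine hφ₀ ((hindAdj _ _).mpr h1) ((hindAdj _ _).mpr h2) ?_ ?_
            · intro h
              rw [Prod.mk.injEq] at h
              exact hne (by
                rw [Prod.mk.injEq]
                exact ⟨congrArg Subtype.val h.1, congrArg Subtype.val h.2⟩)
            · rcases hdis with h | h | h | h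
              · exact Or.inl (Subtype.ext h)
              · exact Or.inr (Or.inl (hlift _ _ _ _ h))
              · exact Or.inr (Or.inr (Or.inl (hlift _ _ _ _ h)))
              · exact Or.inr (Or.inr (Or.inr (hlift _ _ _ _ h)))
  · -- the ℓ-condition
    intro v
    by_cases hvu : v = u
    · subst hvu
      have hSeq : {c : Fin N | ∃ x, G.Adj x v ∧ φ x v = c}
          = ↑(Finset.univ.image cc) := by
        ext c
        simp only [Set.mem_setOf_eq, Finset.coe_image, Set.mem_image, Finset.mem_coe,
          Finset.mem_univ, Finset.coe_univ, Set.mem_univ, true_and, Set.image_univ,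
          Set.mem_range]
        constructor
        · rintro ⟨x, hx, heq⟩
          exact ⟨⟨x, hmem_of_adj hx.symm⟩, by rw [← heq, φcc hx]⟩
        · rintro ⟨j, hj⟩
          refine ⟨(j : V), (hadj_of_mem j.2).symm, ?_⟩
          rw [φcc (hadj_of_mem j.2).symm, ← hj]
      rw [hSeq, Set.ncard_coe_finset]
      have h1 : (Finset.univ.image cc).card ≤ Fintype.card {x // x ∈ nbr} := by
        have := Finset.card_image_le (s := (Finset.univ : Finset {x // x ∈ nbr})) (f := cc)
        rwa [Finset.card_univ] at this
      omega
    · by_cases hadj : G.Adj u v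
      · set j : {x // x ∈ nbr} := ⟨v, hmem_of_adj hadj⟩ with hj_def
        have hSeq : {c : Fin N | ∃ x, G.Adj x v ∧ φ x v = c}
            = ↑(insert (dd j) (A j)) := by
          ext c
          simp only [Set.mem_setOf_eq, Finset.coe_insert, Set.mem_insert_iff,
            Finset.mem_coe]
          constructor
          · rintro ⟨x, hx, heq⟩
            by_cases hxu : x = u
            · subst hxu
              left
              rw [← heq, φdd hadj]
            · right
              rw [← heq, φold hxu hvu]
              exact hAmem j ⟨x, hmemW hxu⟩ ((hindAdj _ _).mpr hx)
          · rintro (h | h)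
            · exact ⟨u, hadj, by rw [φdd hadj, h]⟩
            · rw [hA_def] at h
              simp only [Finset.mem_image, Finset.mem_filter, Finset.mem_univ,
                true_and] at h
              obtain ⟨y, hy, rfl⟩ := h
              have hyv : G.Adj (y : V) v := (hindAdj _ _).mp hy
              have hyu : (y : V) ≠ u := Set.mem_compl_singleton_iff.mp y.2
              refine ⟨(y : V), hyv, ?_⟩
              rw [φold hyu hvu]
        rw [hSeq, Set.ncard_coe_finset]
        have := hins j
        omega
      · have hSeq : {c : Fin N | ∃ x, G.Adj x v ∧ φ x v = c}
            = {c : Fin N | ∃ y, Gind.Adj y (⟨v, hmemW hvu⟩ : ↥({u}ᶜ : Set V))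
                ∧ φ₀ y ⟨v, hmemW hvu⟩ = c} := by
          ext c
          simp only [Set.mem_setOf_eq]
          constructor
          · rintro ⟨x, hx, heq⟩
            have hxu : x ≠ u := by
              rintro rfl
              exact hadj hx
            exact ⟨⟨x, hmemW hxu⟩, (hindAdj _ _).mpr hx, by rw [← heq, φold hxu hvu]⟩
          · rintro ⟨y, hy, heq⟩
            have hyu : (y : V) ≠ u := Set.mem_compl_singleton_iff.mp y.2
            refine ⟨(y : V), (hindAdj _ _).mp hy, ?_⟩
            rw [φold hyu hvu, ← heq]
        rw [hSeq]
        exact hℓ₀ _
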